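/- Let U : C → C be an endofunctor, and suppose the induced functor Û : Comma(1_C, 1_C) → Comma(1_C, U), sending (X, f : X → Y, Y) to (U X, U f : U X → U Y, Y) and (u, v) to (U u, v), has a left adjoint F̂. Let G be a dense full subcategory of C with inclusion inducing j : Comma(G, U) → Comma(1_C, U). Then U is the pointwise left Kan extension of dom ∘ j along dom ∘ F̂ ∘ j, where dom denotes the domain projection functors of the respective comma categories. -/

import Mathlib

open CategoryTheory Limits

universe v u₁ u₂

variable {C : Type u₁} [Category.{v} C]

/-- The canonical cocone on the diagram of all morphisms from objects of the subcategory
(along `ι`) into `X`, with apex `X`. -/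
@[simps]
def canonicalCocone {G : Type u₁} [Category.{v} G] (ι : G ⥤ C) (X : C) :
    Cocone (CostructuredArrow.proj ι X ⋙ ι) where
  pt := X
  ι := { app := fun g => g.hom
         naturality := fun _ _ f => by erw [Category.comp_id]; exact CostructuredArrow.w f }

/-- `ι` is dense if every object of `C` is the colimit of the canonical diagram of
morphisms from objects of the subcategory into it. -/
def IsDense {G : Type u₁} [Category.{v} G] (ι : G ⥤ C) : Prop :=
  ∀ X : C, Nonempty (IsColimit (canonicalCocone ι X))

/-- The inclusion `j : Comma ι U ⥤ Comma (𝟭 C) U` induced by `ι : G ⥤ C`. -/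
@[simps]
def commaIncl {G : Type u₁} [Category.{v} G] {D : Type u₂} [Category.{v} D]
    (ι : G ⥤ C) (U : D ⥤ C) : Comma ι U ⥤ Comma (𝟭 C) U where
  obj p := { left := ι.obj p.left, right := p.right, hom := p.hom }
  map φ := { left := ι.map φ.left, right := φ.right, w := by simp [φ.w] }

/-- The functor `Û : Comma (𝟭 C) (𝟭 C) ⥤ Comma (𝟭 C) U` induced by an endofunctor
`U : C ⥤ C`, sending `(X, f : X ⟶ Y, Y)` to `(U X, U f : U X ⟶ U Y, Y)`. -/
@[simps]
def commaLift (U : C ⥤ C) : Comma (𝟭 C) (𝟭 C) ⥤ Comma (𝟭 C) U where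
  obj f := { left := U.obj f.left, right := f.right, hom := U.map f.hom }
  map φ :=
    { left := U.map φ.left
      right := φ.right
      w := by
        simp only [Functor.id_obj, Functor.id_map, ← U.map_comp]
        congr 1
        simpa using φ.w }

/-- The unit of the extension in Proposition 1: at `p : Comma ι U`, the left component of
the unit of the adjunction `F̂ ⊣ Û` at `j.obj p`. -/
@[simps]
def prop1Unit {G : Type u₁} [Category.{v} G] (ι : G ⥤ C) (U : C ⥤ C)
    (Fhat : Comma (𝟭 C) U ⥤ Comma (𝟭 C) (𝟭 C)) (adj : Fhat ⊣ commaLift U) :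
    commaIncl ι U ⋙ Comma.fst (𝟭 C) U ⟶
      (commaIncl ι U ⋙ Fhat ⋙ Comma.fst (𝟭 C) (𝟭 C)) ⋙ U where
  app p := (adj.unit.app ((commaIncl ι U).obj p)).left
  naturality p q φ := by
    have h := congrArg CommaMorphism.left (adj.unit.naturality ((commaIncl ι U).map φ))
    simp only [Comma.comp_left] at h
    exact h

section Aux

variable {G : Type u₁} [Category.{v} G] (ι : G ⥤ C) (U : C ⥤ C)
  (Fhat : Comma (𝟭 C) U ⥤ Comma (𝟭 C) (𝟭 C)) (adj : Fhat ⊣ commaLift U)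

/-- `dom ∘ F̂ ∘ j`. -/
abbrev prop1L : Comma ι U ⥤ C := commaIncl ι U ⋙ Fhat ⋙ Comma.fst (𝟭 C) (𝟭 C)

/-- `dom ∘ j`. -/
abbrev prop1F : Comma ι U ⥤ C := commaIncl ι U ⋙ Comma.fst (𝟭 C) U

/-- `σ Y = (Y, id, Y)`. -/
@[simps]
def sigmaC (Y : C) : Comma (𝟭 C) (𝟭 C) := { left := Y, right := Y, hom := 𝟙 Y }

/-- The object `(A, h, Y)` of `Comma ι U`. -/
@[simps]
def cObj (Y : C) {A : G} (h : ι.obj A ⟶ U.obj Y) : Comma ι U :=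
  { left := A, right := Y, hom := h }

/-- The morphism `(h, 𝟙 Y) : j (A,h,Y) ⟶ Û (σ Y)`. -/
@[simps]
def eMor (Y : C) {A : G} (h : ι.obj A ⟶ U.obj Y) :
    (commaIncl ι U).obj (cObj ι U Y h) ⟶ (commaLift U).obj (sigmaC Y) where
  left := h
  right := 𝟙 Y
  w := by dsimp [sigmaC, commaLift, commaIncl, cObj]

/-- `g_{h}` : the domain component of the adjoint transpose of `eMor`. -/
def gMor (Y : C) {A : G} (h : ι.obj A ⟶ U.obj Y) :
    (prop1L ι U Fhat).obj (cObj ι U Y h) ⟶ Y :=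
  ((adj.homEquiv _ _).symm (eMor ι U Y h)).left

lemma symm_unit (X : Comma (𝟭 C) U) :
    (adj.homEquiv X _).symm (adj.unit.app X) = 𝟙 _ := by
  apply (adj.homEquiv _ _).injective
  rw [Equiv.apply_symm_apply, ← Adjunction.homEquiv_id]

lemma leg_gMor (Y : C) {A : G} (h : ι.obj A ⟶ U.obj Y) :
    (adj.unit.app ((commaIncl ι U).obj (cObj ι U Y h))).left ≫
      U.map (gMor ι U Fhat adj Y h) = h := by
  have h1 : adj.homEquiv _ _ ((adj.homEquiv _ _).symm (eMor ι U Y h)) = eMor ι U Y h :=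
    Equiv.apply_symm_apply _ _
  rw [Adjunction.homEquiv_unit] at h1
  have := congrArg CommaMorphism.left h1
  exact this

lemma prop1L_map_symm {c c' : Comma ι U} (ψ : c ⟶ c') {Z : Comma (𝟭 C) (𝟭 C)}
    (e' : (commaIncl ι U).obj c' ⟶ (commaLift U).obj Z) :
    (prop1L ι U Fhat).map ψ ≫ ((adj.homEquiv _ _).symm e').left =
      ((adj.homEquiv _ _).symm ((commaIncl ι U).map ψ ≫ e')).left := by
  rw [Adjunction.homEquiv_naturality_left_symm, Comma.comp_left]
  rfl

end Aux

section Zigzag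

variable {G : Type u₁} [Category.{v} G] (ι : G ⥤ C) (U : C ⥤ C)
  (Fhat : Comma (𝟭 C) U ⥤ Comma (𝟭 C) (𝟭 C)) (adj : Fhat ⊣ commaLift U)

lemma zigzag (Y : C)
    (s : Cocone (CostructuredArrow.proj (prop1L ι U Fhat) Y ⋙ prop1F ι U))
    (x : CostructuredArrow (prop1L ι U Fhat) Y) :
    s.ι.app x = s.ι.app (CostructuredArrow.mk
      (gMor ι U Fhat adj Y
        ((adj.unit.app ((commaIncl ι U).obj x.left)).left ≫ U.map x.hom))) := by
  set c : Comma ι U := x.left with hc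
  set g : (prop1L ι U Fhat).obj c ⟶ Y := x.hom with hg
  set η := adj.unit.app ((commaIncl ι U).obj c) with hη
  set Fc := Fhat.obj ((commaIncl ι U).obj c) with hFc
  -- intermediate objects
  set c₂ : Comma ι U := ⟨c.left, Fc.right, η.left ≫ U.map Fc.hom⟩ with hc₂
  set c₁ : Comma ι U := ⟨c.left, Fc.left, η.left⟩ with hc₁
  -- morphisms to Û of things
  have we₂ : (𝟭 C).map η.left ≫ ((commaLift U).obj Fc).hom =
      ((commaIncl ι U).obj c₂).hom ≫ U.map (𝟙 Fc.right) := by dsimp [c₂, commaIncl, commaLift]; simp; rfl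
  set e₂ : (commaIncl ι U).obj c₂ ⟶ (commaLift U).obj Fc :=
    ⟨η.left, 𝟙 Fc.right, we₂⟩ with he₂
  have we₁ : (𝟭 C).map η.left ≫ ((commaLift U).obj (sigmaC Fc.left)).hom =
      ((commaIncl ι U).obj c₁).hom ≫ U.map (𝟙 Fc.left) := by dsimp [c₁, commaIncl, commaLift, sigmaC]; simp; rfl
  set e₁ : (commaIncl ι U).obj c₁ ⟶ (commaLift U).obj (sigmaC Fc.left) :=
    ⟨η.left, 𝟙 Fc.left, we₁⟩ with he₁
  set κ : sigmaC Fc.left ⟶ Fc := ⟨𝟙 Fc.left, Fc.hom, by dsimp [sigmaC]⟩ with hκ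
  set σg : sigmaC Fc.left ⟶ sigmaC Y := ⟨g, g, by dsimp [sigmaC]; simp⟩ with hσg
  set g₂ : (prop1L ι U Fhat).obj c₂ ⟶ Y := ((adj.homEquiv _ _).symm e₂).left ≫ g with hg₂
  set g₁ : (prop1L ι U Fhat).obj c₁ ⟶ Y := ((adj.homEquiv _ _).symm e₁).left ≫ g with hg₁
  -- morphisms in Comma ι U
  set ψa : c ⟶ c₂ := ⟨𝟙 c.left, η.right, by have hw := η.w; simp at hw; dsimp [c₂]; simp; exact hw⟩ with hψa
  set ψb : c₁ ⟶ c₂ := ⟨𝟙 c.left, Fc.hom, by dsimp [c₁, c₂]; simp; rfl⟩ with hψb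
  set h₀ : ι.obj c.left ⟶ U.obj Y := η.left ≫ U.map g with hh₀
  set ψc : c₁ ⟶ cObj ι U Y h₀ := ⟨𝟙 c.left, g, by dsimp [c₁, cObj]; simp [hh₀]; rfl⟩ with hψc
  -- costructured arrow morphisms
  have wa : (prop1L ι U Fhat).map ψa ≫ g₂ = g := by
    rw [hg₂, ← Category.assoc, prop1L_map_symm]
    have : (commaIncl ι U).map ψa ≫ e₂ = adj.unit.app ((commaIncl ι U).obj c) := by
      apply CommaMorphism.ext <;> simp [hψa, he₂, hη]
      exact Category.id_comp _
      exact Category.comp_id _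
    rw [this, symm_unit]
    simp
    exact Category.id_comp _
  have wb : (prop1L ι U Fhat).map ψb ≫ g₂ = g₁ := by
    rw [hg₂, ← Category.assoc, prop1L_map_symm]
    have : (commaIncl ι U).map ψb ≫ e₂ = e₁ ≫ (commaLift U).map κ := by
      apply CommaMorphism.ext <;> simp [hψb, he₂, he₁, hκ]
      erw [ι.map_id, U.map_id, Category.id_comp, Category.comp_id]
      exact (Category.comp_id _).trans (Category.id_comp _).symm
    rw [this, Adjunction.homEquiv_naturality_right_symm, Comma.comp_left, hg₁]
    simp [hκ]
    erw [Category.comp_id]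
    rfl
  have wc : (prop1L ι U Fhat).map ψc ≫ gMor ι U Fhat adj Y h₀ = g₁ := by
    rw [gMor]; refine (prop1L_map_symm ι U Fhat adj ψc (eMor ι U Y h₀)).trans ?_
    have : (commaIncl ι U).map ψc ≫ eMor ι U Y h₀ = e₁ ≫ (commaLift U).map σg := by
      apply CommaMorphism.ext <;> simp [hψc, he₁, hσg, eMor, hh₀]
      erw [ι.map_id, Category.id_comp]
      rfl
      exact (Category.comp_id g).trans (Category.id_comp g).symm
    rw [this, Adjunction.homEquiv_naturality_right_symm, Comma.comp_left, hg₁]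
    rfl
  have ha := s.w (CostructuredArrow.homMk ψa wa : x ⟶ CostructuredArrow.mk g₂)
  have hb := s.w (CostructuredArrow.homMk ψb wb :
    CostructuredArrow.mk g₁ ⟶ CostructuredArrow.mk g₂)
  have hcc := s.w (CostructuredArrow.homMk ψc wc :
    CostructuredArrow.mk g₁ ⟶ CostructuredArrow.mk (gMor ι U Fhat adj Y h₀))
  simp only [Functor.comp_map, CostructuredArrow.proj_map, CostructuredArrow.homMk_left,
    hψa, hψb, hψc, prop1F, commaIncl_map_left, Comma.fst_map, Functor.map_id,
    Category.id_comp] at ha hb hcc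
  simp at hcc
  erw [Functor.comp_map, Comma.fst_map, commaIncl_map_left, ι.map_id, Category.id_comp] at hcc
  exact ha.symm.trans (hb.trans hcc.symm)

end Zigzag

section Main

variable {G : Type u₁} [Category.{v} G] (ι : G ⥤ C) (U : C ⥤ C)
  (Fhat : Comma (𝟭 C) U ⥤ Comma (𝟭 C) (𝟭 C)) (adj : Fhat ⊣ commaLift U)

/-- The cocone on the canonical density diagram at `U Y` obtained from a cocone on the
Kan-extension diagram at `Y`. -/
def tCocone (Y : C)
    (s : Cocone (CostructuredArrow.proj (prop1L ι U Fhat) Y ⋙ prop1F ι U)) :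
    Cocone (CostructuredArrow.proj ι (U.obj Y) ⋙ ι) where
  pt := s.pt
  ι :=
    { app := fun q => s.ι.app (CostructuredArrow.mk (gMor ι U Fhat adj Y q.hom))
      naturality := fun q q' φ => by
        have wψ : ι.map φ.left ≫ (cObj ι U Y q'.hom).hom =
            (cObj ι U Y q.hom).hom ≫ U.map (𝟙 Y) := by
          simp [cObj, CostructuredArrow.w φ]
        set ψ : cObj ι U Y q.hom ⟶ cObj ι U Y q'.hom := ⟨φ.left, 𝟙 Y, wψ⟩ with hψ
        have he : (commaIncl ι U).map ψ ≫ eMor ι U Y q'.hom = eMor ι U Y q.hom := by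
          apply CommaMorphism.ext <;> simp [hψ, eMor, CostructuredArrow.w φ]
          exact CostructuredArrow.w φ
          exact Category.id_comp _
        have wχ : (prop1L ι U Fhat).map ψ ≫ gMor ι U Fhat adj Y q'.hom =
            gMor ι U Fhat adj Y q.hom := by
          rw [gMor]; refine (prop1L_map_symm ι U Fhat adj ψ _).trans ?_; rw [he, gMor]
        have hw := s.w (CostructuredArrow.homMk ψ wχ :
          CostructuredArrow.mk (gMor ι U Fhat adj Y q.hom) ⟶
            CostructuredArrow.mk (gMor ι U Fhat adj Y q'.hom))
        simp only [Functor.comp_map, CostructuredArrow.proj_map,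
          CostructuredArrow.homMk_left, hψ] at hw
        exact hw.trans (Category.comp_id _).symm }

end Main


/-- Proposition 1: if `U : C ⥤ C` is an endofunctor such that the induced functor
`Û : Comma (𝟭 C) (𝟭 C) ⥤ Comma (𝟭 C) U` has a left adjoint `F̂`, and `ι : G ⥤ C` is a
dense full subcategory inclusion, then `U` is the pointwise left Kan extension of
`dom ∘ j` along `dom ∘ F̂ ∘ j`, with unit induced by the unit of the adjunction. -/
theorem prop1_pointwiseLeftKanExtension
    {G : Type u₁} [Category.{v} G] (ι : G ⥤ C) [ι.Full] [ι.Faithful]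
    (hdense : IsDense ι) (U : C ⥤ C)
    (Fhat : Comma (𝟭 C) U ⥤ Comma (𝟭 C) (𝟭 C)) (adj : Fhat ⊣ commaLift U) :
    Nonempty ((Functor.LeftExtension.mk U
      (prop1Unit ι U Fhat adj)).IsPointwiseLeftKanExtension) := by
  refine ⟨fun Y => ?_⟩
  have hcol := (hdense (U.obj Y)).some
  exact
    { desc := fun s => hcol.desc (tCocone ι U Fhat adj Y s)
      fac := fun s x => by
        have hz := zigzag ι U Fhat adj Y s x
        have hfac := hcol.fac (tCocone ι U Fhat adj Y s)
          (CostructuredArrow.mk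
            ((adj.unit.app ((commaIncl ι U).obj x.left)).left ≫ U.map x.hom))
        dsimp [tCocone, canonicalCocone] at hfac ⊢
        rw [hz]
        exact hfac
      uniq := fun s m hm => by
        refine hcol.uniq (tCocone ι U Fhat adj Y s) m (fun q => ?_)
        have h1 := leg_gMor ι U Fhat adj Y q.hom
        have h2 := hm (CostructuredArrow.mk (gMor ι U Fhat adj Y q.hom))
        dsimp [tCocone, canonicalCocone] at h2 ⊢
        conv_lhs => rw [← h1]
        exact h2 }
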